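/- arXiv:1910.03770 — 2 statements merged into one kernel-verified Lean document; each statement's English description precedes it below -/
import Mathlib

section
/- Let n ≥ 0 and 0 ≤ k ≤ n, and let x and y be I-states of size k (k-element subsets of {0,1,…,n}). Then x and y are too far if and only if there exists an index i with 1 ≤ i ≤ n−k such that h_i^x ≥ h_{i+1}^y or h_i^y ≥ h_{i+1}^x. -/
/-- The `i`-th smallest element (0-indexed) of a finite set of natural numbers;
`nthElt s i` is `x_{i+1}` in the 1-indexed notation `x = {x_1 < x_2 < ⋯ < x_k}`. -/
def nthElt (s : Finset ℕ) (i : ℕ) : ℕ := (s.sort (· ≤ ·)).getD i 0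

/-- The hole set of an I-state: the complement `{0, …, n} \ s`. -/
def holes (n : ℕ) (s : Finset ℕ) : Finset ℕ := Finset.range (n + 1) \ s

/-- The `i`-th hole (0-indexed): `hnth n s i` is `h_{i+1}^s` in 1-indexed notation. -/
def hnth (n : ℕ) (s : Finset ℕ) (i : ℕ) : ℕ := nthElt (holes n s) i

/-- Two I-states of size `k` are too far if `|x_i − y_i| > 1` for some `1 ≤ i ≤ k`. -/
def TooFar (k : ℕ) (x y : Finset ℕ) : Prop :=
  ∃ i < k, 1 < ((nthElt x i : ℤ) - (nthElt y i : ℤ)).natAbs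

lemma sorted_le_get_iff (l : List ℕ) (hl : l.Pairwise (· < ·)) (i : ℕ) (hi : i < l.length) (m : ℕ) :
    m ≤ l.get ⟨i, hi⟩ ↔ l.countP (fun a => decide (a < m)) ≤ i := by
  induction l generalizing i with
  | nil => simp at hi
  | cons a t ih =>
    have hat : ∀ b ∈ t, a < b := (List.pairwise_cons.mp hl).1
    have ht : t.Pairwise (· < ·) := (List.pairwise_cons.mp hl).2
    cases i with
    | zero =>
      simp only [List.get]
      rw [List.countP_cons]
      by_cases ham : a < m
      · simp [ham]
      · have h0 : t.countP (fun b => decide (b < m)) = 0 := by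
          rw [List.countP_eq_zero]
          intro b hb
          simp only [decide_eq_true_eq]
          have := hat b hb
          omega
        simp [ham, h0]
        omega
    | succ j =>
      have hj : j < t.length := by simpa using hi
      simp only [List.get]
      rw [List.countP_cons]
      by_cases ham : a < m
      · rw [ih ht j hj]
        simp [ham]
      · have hm : m ≤ t.get ⟨j, hj⟩ := by
          have := hat _ (t.get_mem ⟨j, hj⟩)
          omega
        have h0 : t.countP (fun b => decide (b < m)) = 0 := by
          rw [List.countP_eq_zero]
          intro b hb
          simp only [decide_eq_true_eq]
          have := hat b hb
          omega
        simp [ham, h0]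
        exact hm
lemma nthElt_le_iff (s : Finset ℕ) {i : ℕ} (hi : i < s.card) (m : ℕ) :
    m ≤ nthElt s i ↔ (s.filter (· < m)).card ≤ i := by
  have hlen : (s.sort (· ≤ ·)).length = s.card := Finset.length_sort _
  have hi' : i < (s.sort (· ≤ ·)).length := by omega
  have hget : nthElt s i = (s.sort (· ≤ ·)).get ⟨i, hi'⟩ := by
    simp [nthElt, List.getD_eq_getElem?_getD, List.getElem?_eq_getElem hi']
  have hcount : (s.sort (· ≤ ·)).countP (fun a => decide (a < m)) = (s.filter (· < m)).card := by
    have h1 : (s.filter (· < m)).card = Multiset.countP (fun a => decide (a < m)) s.val := by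
      rw [Finset.card_def, Finset.filter_val, Multiset.countP_eq_card_filter]
      congr 1
      simp
    have h2 : (Multiset.ofList (s.sort (· ≤ ·))) = s.val := Finset.sort_eq _ _
    rw [h1, ← h2, Multiset.coe_countP]
    simp
  rw [hget, ← hcount]
  exact sorted_le_get_iff _ (Finset.sortedLT_sort s).pairwise i hi' m
lemma nthElt_mem (s : Finset ℕ) {i : ℕ} (hi : i < s.card) : nthElt s i ∈ s := by
  have hlen : (s.sort (· ≤ ·)).length = s.card := Finset.length_sort _
  have hi' : i < (s.sort (· ≤ ·)).length := by omega
  have hget : nthElt s i = (s.sort (· ≤ ·)).get ⟨i, hi'⟩ := by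
    simp [nthElt, List.getD_eq_getElem?_getD, List.getElem?_eq_getElem hi']
  rw [hget, ← Finset.mem_sort (· ≤ ·)]
  exact List.get_mem _ _
lemma nthElt_strictMono (s : Finset ℕ) {i j : ℕ} (hij : i < j) (hj : j < s.card) :
    nthElt s i < nthElt s j := by
  have hlen : (s.sort (· ≤ ·)).length = s.card := Finset.length_sort _
  have hj' : j < (s.sort (· ≤ ·)).length := by omega
  have hi' : i < (s.sort (· ≤ ·)).length := by omega
  have hgi : nthElt s i = (s.sort (· ≤ ·)).get ⟨i, hi'⟩ := by
    simp [nthElt, List.getD_eq_getElem?_getD, List.getElem?_eq_getElem hi']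
  have hgj : nthElt s j = (s.sort (· ≤ ·)).get ⟨j, hj'⟩ := by
    simp [nthElt, List.getD_eq_getElem?_getD, List.getElem?_eq_getElem hj']
  rw [hgi, hgj]
  exact (Finset.sortedLT_sort s).strictMono_get (by exact hij)
lemma holes_card (n : ℕ) (s : Finset ℕ) (hs : s ⊆ Finset.range (n+1)) :
    (holes n s).card = n + 1 - s.card := by
  rw [holes, Finset.card_sdiff_of_subset hs, Finset.card_range]
lemma count_add (n : ℕ) (s : Finset ℕ) (hs : s ⊆ Finset.range (n+1)) (m : ℕ) (hm : m ≤ n+1) :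
    (s.filter (· < m)).card + ((holes n s).filter (· < m)).card = m := by
  have key : (holes n s).filter (· < m) = Finset.range m \ (s.filter (· < m)) := by
    ext a
    simp only [holes, Finset.mem_sdiff, Finset.mem_filter, Finset.mem_range]
    constructor
    · rintro ⟨⟨_, h2⟩, h3⟩
      exact ⟨h3, fun h => h2 h.1⟩
    · rintro ⟨h1, h2⟩
      exact ⟨⟨by omega, fun hs' => h2 ⟨hs', h1⟩⟩, h1⟩
  have hsub : (s.filter (· < m)) ⊆ Finset.range m := by
    intro a ha
    rw [Finset.mem_filter] at ha
    rw [Finset.mem_range]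
    exact ha.2
  have hle := Finset.card_le_card hsub
  rw [Finset.card_range] at hle
  rw [key, Finset.card_sdiff_of_subset hsub, Finset.card_range]
  omega
lemma count_nthElt_succ (s : Finset ℕ) {i : ℕ} (hi : i < s.card) :
    (s.filter (· < nthElt s i + 1)).card = i + 1 := by
  have h1 : ¬ (s.filter (· < nthElt s i + 1)).card ≤ i := by
    intro h
    have := (nthElt_le_iff s hi (nthElt s i + 1)).mpr h
    omega
  have h2 : (s.filter (· < nthElt s i + 1)).card ≤ i + 1 := by
    rcases lt_or_eq_of_le (Nat.succ_le_of_lt hi) with h | h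
    · exact (nthElt_le_iff s h (nthElt s i + 1)).mp (nthElt_strictMono s (by omega) h)
    · calc (s.filter (· < nthElt s i + 1)).card ≤ s.card := Finset.card_filter_le _ _
        _ = i + 1 := h.symm
  omega
lemma forward_one (n k : ℕ) (x y : Finset ℕ)
    (hx : x ⊆ Finset.range (n + 1)) (hy : y ⊆ Finset.range (n + 1))
    (hxk : x.card = k) (hyk : y.card = k) {i : ℕ} (hik : i < k)
    (hlt : nthElt y i + 2 ≤ nthElt x i) :
    ∃ j < n - k, hnth n x (j + 1) ≤ hnth n y j := by
  set a := nthElt x i with ha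
  set b := nthElt y i with hb
  have hxc : i < x.card := by omega
  have hyc : i < y.card := by omega
  have han : a ≤ n := by
    have := hx (nthElt_mem x hxc)
    rw [Finset.mem_range] at this; omega
  have hbn : b ≤ n := by
    have := hy (nthElt_mem y hyc)
    rw [Finset.mem_range] at this; omega
  -- counts at b+1 and a+1
  have hFy : (y.filter (· < b + 1)).card = i + 1 := count_nthElt_succ y hyc
  have hFx : (x.filter (· < a + 1)).card = i + 1 := count_nthElt_succ x hxc
  have hGy := count_add n y hy (b+1) (by omega)
  have hGx := count_add n x hx (a+1) (by omega)
  -- b ≥ i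
  have hbi : i ≤ b := by
    have hsub : (y.filter (· < b + 1)) ⊆ Finset.range (b+1) := by
      intro c hc
      rw [Finset.mem_filter] at hc
      rw [Finset.mem_range]
      exact hc.2
    have := Finset.card_le_card hsub
    rw [Finset.card_range] at this
    omega
  have hcholx : (holes n x).card = n + 1 - k := by rw [holes_card n x hx, hxk]
  have hcholy : (holes n y).card = n + 1 - k := by rw [holes_card n y hy, hyk]
  have hGxcard : ((holes n x).filter (· < a + 1)).card ≤ n + 1 - k := by
    calc _ ≤ (holes n x).card := Finset.card_filter_le _ _
      _ = n + 1 - k := hcholx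
  have hkn' : k ≤ n := by
    have := Finset.card_le_card hx
    rw [Finset.card_range, hxk] at this
    have : a - i ≤ n + 1 - k := by omega
    omega
  -- j := b - i, j < n - k since a - i ≤ n+1-k and b+2 ≤ a
  refine ⟨b - i, by omega, ?_⟩
  -- h^y_j ≥ b+1
  have hjy : b - i < (holes n y).card := by omega
  have hyj : b + 1 ≤ hnth n y (b - i) := by
    rw [hnth]
    rw [nthElt_le_iff _ hjy]
    omega
  -- h^x_{j+1} ≤ b+1
  have hjx : b - i + 1 < (holes n x).card := by omega
  have hFx2 : (x.filter (· < b + 2)).card ≤ i := (nthElt_le_iff x hxc (b+2)).mp hlt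
  have hGx2 := count_add n x hx (b+2) (by omega)
  have hxj : ¬ (b + 2 ≤ hnth n x (b - i + 1)) := by
    intro hcon
    rw [hnth, nthElt_le_iff _ hjx] at hcon
    omega
  omega
lemma backward_one (n k : ℕ) (x y : Finset ℕ)
    (hx : x ⊆ Finset.range (n + 1)) (hy : y ⊆ Finset.range (n + 1))
    (hxk : x.card = k) (hyk : y.card = k) {j : ℕ} (hjk : j < n - k)
    (h : hnth n x (j + 1) ≤ hnth n y j) :
    ∃ i < k, nthElt y i + 2 ≤ nthElt x i := by
  have hcholx : (holes n x).card = n + 1 - k := by rw [holes_card n x hx, hxk]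
  have hcholy : (holes n y).card = n + 1 - k := by rw [holes_card n y hy, hyk]
  have hjy : j < (holes n y).card := by omega
  have hjx : j + 1 < (holes n x).card := by omega
  set m := hnth n y j with hm
  have hmeq : m = nthElt (holes n y) j := rfl
  have hmn : m ≤ n := by
    have hmem := nthElt_mem (holes n y) hjy
    have h2 : nthElt (holes n y) j ∈ Finset.range (n+1) := by
      rw [holes] at hmem
      exact (Finset.mem_sdiff.mp hmem).1
    rw [Finset.mem_range] at h2
    omega
  -- G_y(m) ≤ j
  have hGym : ((holes n y).filter (· < m)).card ≤ j :=
    (nthElt_le_iff _ hjy m).mp le_rfl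
  -- G_y(m+1) ≥ j+1
  have hGym1 : j + 1 ≤ ((holes n y).filter (· < m + 1)).card := by
    by_contra hcon
    have := (nthElt_le_iff _ hjy (m+1)).mpr (by omega)
    omega
  -- G_x(m+1) ≥ j+2
  have hGxm1 : j + 2 ≤ ((holes n x).filter (· < m + 1)).card := by
    by_contra hcon
    have := (nthElt_le_iff _ hjx (m+1)).mpr (by omega)
    rw [hnth] at h
    omega
  have hcx := count_add n x hx (m+1) (by omega)
  have hcy := count_add n y hy m (by omega)
  have hcy1 := count_add n y hy (m+1) (by omega)
  -- i := F_x(m+1)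
  set i := (x.filter (· < m + 1)).card with hi
  have hFyk : (y.filter (· < m)).card ≤ k := by
    rw [← hyk]; exact Finset.card_filter_le _ _
  have hik : i < k := by omega
  have hix : i < x.card := by omega
  have hxi : m + 1 ≤ nthElt x i := (nthElt_le_iff x hix (m+1)).mpr le_rfl
  have hiy : i < y.card := by omega
  have hyi : ¬ (m ≤ nthElt y i) := by
    intro hcon
    have := (nthElt_le_iff y hiy m).mp hcon
    omega
  exact ⟨i, hik, by omega⟩

/-- Lemma: `x` and `y` are too far iff `h_i^x ≥ h_{i+1}^y` or `h_i^y ≥ h_{i+1}^x`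
for some `1 ≤ i ≤ n − k` (stated here with 0-indexed `i < n − k`). -/
theorem tooFar_iff_holes (n k : ℕ) (hkn : k ≤ n) (x y : Finset ℕ)
    (hx : x ⊆ Finset.range (n + 1)) (hy : y ⊆ Finset.range (n + 1))
    (hxk : x.card = k) (hyk : y.card = k) :
    TooFar k x y ↔
      ∃ i < n - k, hnth n y (i + 1) ≤ hnth n x i ∨ hnth n x (i + 1) ≤ hnth n y i := by
  simp only [TooFar]
  constructor
  · rintro ⟨i, hik, habs⟩
    rcases le_or_gt (nthElt y i + 2) (nthElt x i) with hcase | hcase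
    · obtain ⟨j, hj, hle⟩ := forward_one n k x y hx hy hxk hyk hik hcase
      exact ⟨j, hj, Or.inr hle⟩
    · have hcase' : nthElt x i + 2 ≤ nthElt y i := by omega
      obtain ⟨j, hj, hle⟩ := forward_one n k y x hy hx hyk hxk hik hcase'
      exact ⟨j, hj, Or.inl hle⟩
  · rintro ⟨j, hj, hle | hle⟩
    · obtain ⟨i, hik, hlt⟩ := backward_one n k y x hy hx hyk hxk hj hle
      exact ⟨i, hik, by omega⟩
    · obtain ⟨i, hik, hlt⟩ := backward_one n k x y hx hy hxk hyk hj hle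
      exact ⟨i, hik, by omega⟩
end

section
/- Let K be a commutative ring, q ∈ K, and let M be a free K-module with basis e_1, …, e_n. In the exterior algebra of M set ℓ_1 = e_1 and ℓ_m = e_m + q·e_{m−1} for 2 ≤ m ≤ n. Then for all 1 < j ≤ i ≤ n: ℓ_i ∧ ℓ_{i−1} ∧ ⋯ ∧ ℓ_j = Σ_{m=j−1}^{i} q^{m−j+1} · e_i ∧ e_{i−1} ∧ ⋯ ∧ ê_m ∧ ⋯ ∧ e_{j−1}, where each summand is the wedge of the basis vectors with indices i, i−1, …, j−1 taken in decreasing order with e_m omitted. Moreover, for all 1 ≤ i ≤ n: ℓ_i ∧ ℓ_{i−1} ∧ ⋯ ∧ ℓ_1 = e_i ∧ e_{i−1} ∧ ⋯ ∧ e_1. -/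
private lemma rev_range'_succ (a len : ℕ) :
    (List.range' a (len+1)).reverse = (List.range' (a+1) len).reverse ++ [a] := by
  rw [List.range'_succ]; simp

private lemma filter_rev_range'_ne {a m : ℕ} (len : ℕ) (h : a ≠ m) :
    ((List.range' a (len+1)).reverse.filter (fun t => t != m)) =
      ((List.range' (a+1) len).reverse.filter (fun t => t != m)) ++ [a] := by
  rw [rev_range'_succ, List.filter_append]
  simp [h]

private lemma filter_rev_range'_eq (a len : ℕ) :
    ((List.range' a (len+1)).reverse.filter (fun t => t != a)) =
      (List.range' (a+1) len).reverse := by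
  rw [rev_range'_succ, List.filter_append]
  have h2 : ((List.range' (a+1) len).reverse.filter (fun t => t != a)) =
      (List.range' (a+1) len).reverse := by
    apply List.filter_eq_self.mpr
    intro b hb
    rw [List.mem_reverse] at hb
    have := List.mem_range'_1.mp hb
    simp only [bne_iff_ne, ne_eq]
    omega
  simp [h2]

/-- Expansion identities in the exterior algebra of a free module `M` over a commutative
ring `K` with basis `e_1, …, e_n` (here `e : ℕ → M` with `B i = e (i+1)` for a basis `B`),
where `ℓ_1 = e_1` and `ℓ_m = e_m + q e_{m−1}` for `2 ≤ m ≤ n`: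
(1) for `1 < j ≤ i ≤ n`,
  `ℓ_i ∧ ℓ_{i−1} ∧ ⋯ ∧ ℓ_j = Σ_{m=j−1}^{i} q^{m−j+1} e_i ∧ ⋯ ∧ ê_m ∧ ⋯ ∧ e_{j−1}`;
(2) for `1 ≤ i ≤ n`, `ℓ_i ∧ ℓ_{i−1} ∧ ⋯ ∧ ℓ_1 = e_i ∧ e_{i−1} ∧ ⋯ ∧ e_1`.
Wedge products are products in `ExteriorAlgebra K M`, taken in decreasing index order. -/
theorem ell_wedge_expansion (n : ℕ) (K : Type*) [CommRing K] (q : K)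
    (M : Type*) [AddCommGroup M] [Module K M]
    (e : ℕ → M) (B : Module.Basis (Fin n) K M) (hB : ∀ i : Fin n, B i = e ((i : ℕ) + 1))
    (ℓ : ℕ → ExteriorAlgebra K M)
    (hℓ1 : ℓ 1 = ExteriorAlgebra.ι K (e 1))
    (hℓ : ∀ m, 2 ≤ m → ℓ m = ExteriorAlgebra.ι K (e m) + q • ExteriorAlgebra.ι K (e (m - 1))) :
    (∀ i j : ℕ, 1 < j → j ≤ i → i ≤ n →
      ((List.range' j (i - j + 1)).reverse.map ℓ).prod =
        ∑ m ∈ Finset.Icc (j - 1) i, q ^ (m + 1 - j) •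
          (((List.range' (j - 1) (i - (j - 1) + 1)).reverse.filter (fun t => t != m)).map
            (fun t => ExteriorAlgebra.ι K (e t))).prod) ∧
    (∀ i : ℕ, 1 ≤ i → i ≤ n →
      ((List.range' 1 i).reverse.map ℓ).prod =
        ((List.range' 1 i).reverse.map (fun t => ExteriorAlgebra.ι K (e t))).prod) := by
  classical
  set ι' : ℕ → ExteriorAlgebra K M := fun t => ExteriorAlgebra.ι K (e t) with hι'
  have hsq : ∀ t, ι' t * ι' t = 0 := fun t => ExteriorAlgebra.ι_sq_zero _
  have hzero : ∀ (l : List ℕ) (a : ℕ), (((l ++ [a]).map ι').prod) * ι' a = 0 := by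
    intro l a
    rw [List.map_append, List.prod_append]
    simp [mul_assoc, hsq a]
  have key : ∀ d j : ℕ, 1 < j → j + d ≤ n →
      ((List.range' j (d+1)).reverse.map ℓ).prod =
        ∑ m ∈ Finset.Icc (j-1) (j+d), q ^ (m + 1 - j) •
          (((List.range' (j-1) (d+2)).reverse.filter (fun t => t != m)).map ι').prod := by
    intro d
    induction d with
    | zero =>
      intro j hj hn
      obtain ⟨k, rfl⟩ : ∃ k, j = k + 2 := ⟨j - 2, by omega⟩
      have hj1 : k + 2 - 1 = k + 1 := rfl
      rw [hj1]
      have hIcc : Finset.Icc (k+1) (k+2+0) = {k+1, k+2} := by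
        ext x; simp; omega
      rw [hIcc, Finset.sum_insert (by simp), Finset.sum_singleton]
      have hf1 : ((List.range' (k+1) (0+2)).reverse.filter (fun t => t != (k+1))) = [k+2] := by
        rw [filter_rev_range'_eq]
        simp [List.range'_succ]
      have hf2 : ((List.range' (k+1) (0+2)).reverse.filter (fun t => t != (k+2))) = [k+1] := by
        rw [filter_rev_range'_ne 1 (by omega)]
        rw [filter_rev_range'_eq]
        simp
      rw [hf1, hf2]
      have he1 : k + 1 + 1 - (k+2) = 0 := by omega
      have he2 : k + 2 + 1 - (k+2) = 1 := by omega
      rw [he1, he2]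
      simp [List.range'_succ, hℓ (k+2) (by omega), hι']
    | succ d ih =>
      intro j hj hn
      obtain ⟨k, rfl⟩ : ∃ k, j = k + 2 := ⟨j - 2, by omega⟩
      have hj1 : k + 2 - 1 = k + 1 := rfl
      rw [hj1]
      -- split off the last factor ℓ (k+2)
      rw [rev_range'_succ (k+2) (d+1), List.map_append, List.prod_append]
      have hIH := ih (k+3) (by omega) (by omega)
      have hj2 : k + 3 - 1 = k + 2 := rfl
      rw [hj2] at hIH
      simp only [List.prod_cons, List.prod_nil, List.map_cons, List.map_nil, mul_one] at *
      rw [hIH, hℓ (k+2) (by omega)]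
      have hsub : (k + 2 : ℕ) - 1 = k + 1 := rfl
      rw [hsub]
      rw [Finset.sum_mul]
      -- each summand * (X + q • Y)
      have expand : ∀ m ∈ Finset.Icc (k+2) (k+3+d),
          (q ^ (m + 1 - (k+3)) •
            (((List.range' (k+2) (d+2)).reverse.filter (fun t => t != m)).map ι').prod)
            * (ι' (k+2) + q • ι' (k+1)) =
          q ^ (m + 1 - (k+3)) •
            ((((List.range' (k+2) (d+2)).reverse.filter (fun t => t != m)).map ι').prod
              * ι' (k+2))
          + q ^ (m + 1 - (k+2)) •
            (((List.range' (k+1) (d+3)).reverse.filter (fun t => t != m)).map ι').prod := by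
        intro m hm
        rw [Finset.mem_Icc] at hm
        rw [mul_add, smul_mul_assoc, smul_mul_assoc]
        congr 1
        rw [mul_smul_comm, smul_smul]
        rw [filter_rev_range'_ne (d+2) (by omega), List.map_append, List.prod_append]
        simp only [List.map_cons, List.map_nil, List.prod_cons, List.prod_nil, mul_one]
        have h11 : k + 1 + 1 = k + 2 := rfl
        rw [h11, ← pow_succ]
        have hex : m + 1 - (k+3) + 1 = m + 1 - (k+2) := by omega
        rw [hex]
      rw [Finset.sum_congr rfl expand, Finset.sum_add_distrib]
      -- first sum collapses to the m = k+2 term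
      have hfirst : (∑ m ∈ Finset.Icc (k+2) (k+3+d),
          q ^ (m + 1 - (k+3)) •
            ((((List.range' (k+2) (d+2)).reverse.filter (fun t => t != m)).map ι').prod
              * ι' (k+2))) =
          (((List.range' (k+1) (d+3)).reverse.filter (fun t => t != (k+1))).map ι').prod := by
        rw [Finset.sum_eq_single (k+2)]
        · rw [filter_rev_range'_eq (k+2) (d+1)]
          have : k + 2 + 1 - (k+3) = 0 := by omega
          rw [this, pow_zero, one_smul]
          rw [filter_rev_range'_eq (k+1) (d+2)]
          rw [rev_range'_succ (k+2) (d+1), List.map_append, List.prod_append]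
          simp
        · intro m hm hne
          rw [Finset.mem_Icc] at hm
          rw [filter_rev_range'_ne (d+1) (by omega)]
          rw [hzero, smul_zero]
        · intro h
          exfalso; apply h; rw [Finset.mem_Icc]; omega
      rw [hfirst]
      -- assemble: insert k+1 into the Icc
      have hIcc : Finset.Icc (k+1) (k+2+(d+1)) = insert (k+1) (Finset.Icc (k+2) (k+3+d)) := by
        ext x; simp; omega
      rw [hIcc, Finset.sum_insert (by rw [Finset.mem_Icc]; omega)]
      have : k + 1 + 1 - (k+2) = 0 := by omega
      rw [this, pow_zero, one_smul]
  constructor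
  · intro i j hj hji hin
    obtain ⟨d, rfl⟩ : ∃ d, i = j + d := ⟨i - j, by omega⟩
    have h1 : j + d - j + 1 = d + 1 := by omega
    have h2 : j + d - (j - 1) + 1 = d + 2 := by omega
    rw [h1, h2]
    exact key d j hj hin
  · intro i h1 hin
    obtain ⟨k, rfl⟩ | rfl : (∃ k, i = k + 2) ∨ i = 1 := by
      rcases i with _ | _ | k
      · omega
      · right; rfl
      · left; exact ⟨k, rfl⟩
    · rw [rev_range'_succ 1 (k+1)]
      simp only [List.map_append, List.prod_append]
      have h11 : (1:ℕ) + 1 = 2 := rfl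
      rw [h11]
      have hkey := key k 2 (by omega) (by omega)
      have : (2 : ℕ) - 1 = 1 := rfl
      rw [this] at hkey
      rw [hkey]
      simp only [List.map_cons, List.map_nil, List.prod_cons, List.prod_nil, mul_one, hℓ1]
      rw [Finset.sum_mul]
      rw [Finset.sum_eq_single 1]
      · rw [filter_rev_range'_eq 1 (k+1)]
        have : (1:ℕ) + 1 - 2 = 0 := by omega
        rw [this, pow_zero, one_smul]
      · intro m hm hne
        rw [Finset.mem_Icc] at hm
        rw [filter_rev_range'_ne (k+1) (by omega), smul_mul_assoc, hzero, smul_zero]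
      · intro h
        exfalso; apply h; rw [Finset.mem_Icc]; omega
    · simp [List.range'_succ, hℓ1, hι']
end
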